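/- Let Γ be a moment graph on Λ and i ≥ 0. Then the coordinate-wise application of the truncated Chern character ch_i maps the multiplicative structure algebra Z_m(Γ) into the truncated rational additive structure algebra Z_a^{≤i}(Γ)_ℚ, and defines a ring homomorphism (the localized Chern character) cch_i : Z_m(Γ) → Z_a^{≤i}(Γ)_ℚ. -/

import Mathlib

open Finset in
lemma texp_core {R : Type*} [CommRing R] [Algebra ℚ R] (i : ℕ) (x y : R)
    (h : ∀ j k : ℕ, i + 1 ≤ j + k → x ^ j * y ^ k = 0) :
    (∑ j ∈ range (i+1), (j.factorial : ℚ)⁻¹ • x ^ j) *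
      (∑ k ∈ range (i+1), (k.factorial : ℚ)⁻¹ • y ^ k) =
    ∑ m ∈ range (i+1), (m.factorial : ℚ)⁻¹ • (x + y) ^ m := by
  set F : ℕ × ℕ → R := fun p =>
    ((p.1.factorial : ℚ)⁻¹ * (p.2.factorial : ℚ)⁻¹) • (x ^ p.1 * y ^ p.2) with hF
  have lhs : (∑ j ∈ range (i+1), (j.factorial : ℚ)⁻¹ • x ^ j) *
      (∑ k ∈ range (i+1), (k.factorial : ℚ)⁻¹ • y ^ k)
      = ∑ p ∈ (range (i+1)) ×ˢ (range (i+1)), F p := by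
    rw [Finset.sum_mul_sum, Finset.sum_product]
    exact Finset.sum_congr rfl fun j _ => Finset.sum_congr rfl fun k _ =>
      (smul_mul_smul_comm _ _ _ _)
  have rhs : ∑ m ∈ range (i+1), (m.factorial : ℚ)⁻¹ • (x + y) ^ m
      = ∑ m ∈ range (i+1), ∑ p ∈ antidiagonal m, F p := by
    refine Finset.sum_congr rfl fun m _ => ?_
    rw [(Commute.all x y).add_pow', Finset.smul_sum]
    refine Finset.sum_congr rfl fun p hp => ?_
    rw [Finset.HasAntidiagonal.mem_antidiagonal] at hp
    rw [← Nat.cast_smul_eq_nsmul ℚ, smul_smul, hF]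
    subst hp
    congr 1
    have h1 : (p.1.factorial : ℚ) ≠ 0 := Nat.cast_ne_zero.mpr p.1.factorial_ne_zero
    have h2 : (p.2.factorial : ℚ) ≠ 0 := Nat.cast_ne_zero.mpr p.2.factorial_ne_zero
    have h3 : ((p.1 + p.2).factorial : ℚ) ≠ 0 := Nat.cast_ne_zero.mpr (p.1 + p.2).factorial_ne_zero
    have knat : (p.1 + p.2).choose p.1 * p.2.factorial * p.1.factorial = (p.1 + p.2).factorial := by
      rw [add_comm p.1 p.2]; exact Nat.add_choose_mul_factorial_mul_factorial p.2 p.1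
    have key : ((p.1 + p.2).choose p.1 : ℚ) * p.2.factorial * p.1.factorial
        = (p.1 + p.2).factorial := by exact_mod_cast congrArg (Nat.cast : ℕ → ℚ) knat
    field_simp
    linarith [key]
  have set_eq : (range (i+1)).biUnion (fun m => antidiagonal m)
      = ((range (i+1)) ×ˢ (range (i+1))).filter (fun p => p.1 + p.2 ≤ i) := by
    ext p
    simp only [mem_biUnion, mem_range, Finset.HasAntidiagonal.mem_antidiagonal, mem_filter, mem_product]
    constructor
    · rintro ⟨m, hm, rfl⟩; omega
    · rintro ⟨⟨h1, h2⟩, h3⟩; exact ⟨p.1 + p.2, by omega, rfl⟩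
  have disj : (↑(range (i+1)) : Set ℕ).PairwiseDisjoint (fun m => antidiagonal m) := by
    intro a _ b _ hab
    refine Finset.disjoint_left.mpr fun p hpa hpb => hab ?_
    rw [Finset.HasAntidiagonal.mem_antidiagonal] at hpa hpb
    omega
  rw [lhs, rhs, ← Finset.sum_biUnion disj, set_eq,
    ← Finset.sum_filter_add_sum_filter_not ((range (i+1)) ×ˢ (range (i+1)))
      (fun p => p.1 + p.2 ≤ i) F]
  have : ∀ p ∈ ((range (i+1)) ×ˢ (range (i+1))).filter (fun p => ¬ p.1 + p.2 ≤ i),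
      F p = 0 := by
    intro p hp
    rw [mem_filter] at hp
    rw [hF]
    simp only
    rw [h p.1 p.2 (by omega), smul_zero]
  rw [Finset.sum_eq_zero this, add_zero]


noncomputable section

/-- A moment graph on a lattice `Λ`: a poset of vertices (the order given as a
relation with axioms), a set of directed edges `E ⊆ V × V`, and a label function
assigning to each edge a nonzero element of `Λ`, such that edges respect the
order and are not loops. -/
structure MomentGraph (Λ : Type*) [AddCommGroup Λ] (V : Type*) where
  le : V → V → Prop
  le_refl : ∀ v, le v v
  le_trans : ∀ u v w, le u v → le v w → le u w
  le_antisymm : ∀ v w, le v w → le w v → v = w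
  E : V → V → Prop
  label : V → V → Λ
  label_ne_zero : ∀ {v w}, E v w → label v w ≠ 0
  le_of_E : ∀ {v w}, E v w → le v w
  ne_of_E : ∀ {v w}, E v w → v ≠ w

namespace MomentGraph

variable {Λ : Type*} [AddCommGroup Λ] {V V' : Type*}

/-- Underlying (unoriented) adjacency `v — w`. -/
def Adj (G : MomentGraph Λ V) (v w : V) : Prop := G.E v w ∨ G.E w v

open Classical in
/-- The label of the unoriented edge `v — w` (there are no multiple edges, so this
is well defined on adjacent pairs). -/
def albl (G : MomentGraph Λ V) (v w : V) : Λ := if G.E v w then G.label v w else G.label w v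

/-- A morphism of moment graphs on the same lattice `Λ` (Definition 2.3):
a poset morphism on vertices sending edges to edges or collapsing them (MR1),
together with a `ℤ`-linear automorphism of `Λ` for every vertex satisfying
(MR2)(a) and (MR2)(b). -/
structure Hom (G : MomentGraph Λ V) (G' : MomentGraph Λ V') where
  toFun : V → V'
  mono : ∀ {v w}, G.le v w → G'.le (toFun v) (toFun w)
  adj : ∀ {v w}, G.Adj v w → G'.Adj (toFun v) (toFun w) ∨ toFun v = toFun w
  aut : V → (Λ ≃ₗ[ℤ] Λ)
  label_pm : ∀ {v w}, G.Adj v w → toFun v ≠ toFun w →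
      aut v (G.albl v w) = G'.albl (toFun v) (toFun w) ∨
      aut v (G.albl v w) = - G'.albl (toFun v) (toFun w)
  compat : ∀ {v w}, G.Adj v w → toFun v ≠ toFun w → ∀ μ : Λ,
      ∃ n : ℤ, aut v μ - aut w μ = n • G'.albl (toFun v) (toFun w)

/-- A morphism of moment graphs is an isomorphism if it has a two-sided inverse
morphism, inverting both the vertex map and the label automorphisms. -/
def Hom.IsIso {G : MomentGraph Λ V} {G' : MomentGraph Λ V'} (f : G.Hom G') : Prop :=
  ∃ g : G'.Hom G, (∀ v, g.toFun (f.toFun v) = v) ∧ (∀ v', f.toFun (g.toFun v') = v') ∧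
    ∀ v (μ : Λ), g.aut (f.toFun v) (f.aut v μ) = μ

/-- A `Γ`-monodromy: a collection of lattice automorphisms `ξ_v` with
`ξ_v(λ) - ξ_w(λ) ∈ l(v → w)·ℤ` for all edges `v → w`. -/
def Monodromy (G : MomentGraph Λ V) (ξ : V → (Λ ≃ₗ[ℤ] Λ)) : Prop :=
  ∀ {v w}, G.E v w → ∀ μ : Λ, ∃ n : ℤ, ξ v μ - ξ w μ = n • G.label v w

/-- A `Γ`-compatible equivalence relation (EQV1) and (EQV2). -/
def Compatible (G : MomentGraph Λ V) (s : Setoid V) : Prop :=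
  (∀ ⦃v w u⦄, s.r v w → G.le v u → G.le u w → s.r v u) ∧
  (∀ ⦃v₁ w₁⦄, G.E v₁ w₁ → ¬ s.r v₁ w₁ → ∀ v₂, s.r v₂ v₁ →
    (∃! w₂, s.r w₂ w₁ ∧ G.E v₂ w₂) ∧
    (∀ w₂, s.r w₂ w₁ → G.E v₂ w₂ → G.label v₂ w₂ = G.label v₁ w₁))

/-- Edges of the quotient graph: `[v] → [w]` iff `v ≁ w` and there are
representatives joined by an edge. -/
def QE (G : MomentGraph Λ V) (s : Setoid V) (a b : Quotient s) : Prop :=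
  a ≠ b ∧ ∃ v w, Quotient.mk s v = a ∧ Quotient.mk s w = b ∧ G.E v w

open Classical in
/-- The label of a quotient edge, via a choice of representatives. -/
def Qlabel (G : MomentGraph Λ V) (s : Setoid V) (a b : Quotient s) : Λ :=
  if h : ∃ v, ∃ w, Quotient.mk s v = a ∧ Quotient.mk s w = b ∧ G.E v w
  then G.label h.choose h.choose_spec.choose else 0

/-- The covering relation of the vertex poset. -/
def cov (G : MomentGraph Λ V) (v w : V) : Prop :=
  G.le v w ∧ v ≠ w ∧ ∀ u, G.le v u → G.le u w → u = v ∨ u = w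

/-- A special matching of the vertex poset (Definition of Brenti): a bijection `M`
such that `M(v)` covers or is covered by `v`, and if `M(v) ≠ w` and `v ⋖ w`
then `M(v) ≤ M(w)`. -/
def SpecialMatching (G : MomentGraph Λ V) (M : V → V) : Prop :=
  Function.Bijective M ∧ (∀ v, G.cov (M v) v ∨ G.cov v (M v)) ∧
  (∀ v w, M v ≠ w → G.cov v w → G.le (M v) (M w))

end MomentGraph

noncomputable section StructureAlgebras

/-- The generic "structure algebra" construction: given an edge relation `E` on `V`
and an `A`-valued function `lab` (the image of the label of each edge in `A`),
this is the subalgebra of `∏_{v ∈ V} A` of tuples `(z_v)` with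
`z_v - z_w ∈ lab v w · A` for every edge `v → w`, with coordinate-wise operations
and with `A` acting diagonally. -/
def structAlg {V : Type*} {A : Type*} [CommRing A] (E : V → V → Prop) (lab : V → V → A) :
    Subalgebra A (V → A) where
  carrier := {z | ∀ ⦃v w⦄, E v w → ∃ t, z v - z w = lab v w * t}
  mul_mem' := by
    intro a b ha hb v w h
    obtain ⟨t, ht⟩ := ha h
    obtain ⟨t', ht'⟩ := hb h
    refine ⟨a v * t' + t * b w, ?_⟩
    simp only [Pi.mul_apply]
    linear_combination a v * ht' + b w * ht
  one_mem' := by intro v w h; exact ⟨0, by simp⟩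
  add_mem' := by
    intro a b ha hb v w h
    obtain ⟨t, ht⟩ := ha h
    obtain ⟨t', ht'⟩ := hb h
    refine ⟨t + t', ?_⟩
    simp only [Pi.add_apply]
    linear_combination ht + ht'
  zero_mem' := by intro v w h; exact ⟨0, by simp⟩
  algebraMap_mem' := by
    intro r v w h
    exact ⟨0, by simp⟩

set_option synthInstance.maxHeartbeats 4000000 in
instance structAlgAddCommGroup {V A : Type*} [CommRing A] (E : V → V → Prop)
    (lab : V → V → A) : AddCommGroup (structAlg E lab) :=
  inferInstance

set_option synthInstance.maxHeartbeats 4000000 in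
instance structAlgModule {V A : Type*} [CommRing A] (E : V → V → Prop)
    (lab : V → V → A) : Module A (structAlg E lab) :=
  inferInstance

/-- The group ring `ℤ[Λ]`. -/
abbrev GrpRing (Λ : Type*) [AddCommGroup Λ] := AddMonoidAlgebra ℤ Λ

variable {Λ : Type*} [AddCommGroup Λ]

/-- The basis element `e^μ` of the group ring `ℤ[Λ]`. -/
def grExp (μ : Λ) : GrpRing Λ := AddMonoidAlgebra.single μ 1

/-- The element `x_μ = 1 - e^{-μ}` of the group ring `ℤ[Λ]`. -/
def grX (μ : Λ) : GrpRing Λ := 1 - grExp (-μ)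

/-- The augmentation `ℤ[Λ] → ℤ`, `e^λ ↦ 1`. -/
def grAug (Λ : Type*) [AddCommGroup Λ] : GrpRing Λ →+* ℤ :=
  ((AddMonoidAlgebra.lift ℤ ℤ Λ) 1).toRingHom

/-- The augmentation ideal `I_m ⊂ ℤ[Λ]`. -/
def Im (Λ : Type*) [AddCommGroup Λ] : Ideal (GrpRing Λ) := RingHom.ker (grAug Λ)

/-- The multiplicative structure algebra of edge data `(E, lab)`:
tuples `(z_v)` of elements of `ℤ[Λ]` with `z_v - z_w ∈ x_{lab v w}·ℤ[Λ]`
for all edges. -/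
abbrev ZmOf {V : Type*} (E : V → V → Prop) (lab : V → V → Λ) :
    Subalgebra (GrpRing Λ) (V → GrpRing Λ) :=
  structAlg E fun v w => grX (lab v w)

/-- The multiplicative structure algebra `Z_m(Γ)` of a moment graph. -/
abbrev MomentGraph.Zm {V : Type*} (G : MomentGraph Λ V) :
    Subalgebra (GrpRing Λ) (V → GrpRing Λ) :=
  ZmOf G.E G.label

/-- Index type of a chosen basis of the lattice `Λ`. -/
abbrev bIdx (Λ : Type*) [AddCommGroup Λ] [Module.Free ℤ Λ] [Module.Finite ℤ Λ] :=
  Module.Free.ChooseBasisIndex ℤ Λ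

/-- A model of the symmetric algebra `S^*(Λ)` over `ℤ`: the polynomial ring on a
basis of `Λ`. -/
abbrev SymZ (Λ : Type*) [AddCommGroup Λ] [Module.Free ℤ Λ] [Module.Finite ℤ Λ] :=
  MvPolynomial (bIdx Λ) ℤ

variable [Module.Free ℤ Λ] [Module.Finite ℤ Λ]

/-- The canonical embedding `Λ → S^*(Λ)` (degree-one part). -/
def iotaZ (Λ : Type*) [AddCommGroup Λ] [Module.Free ℤ Λ] [Module.Finite ℤ Λ] :
    Λ →ₗ[ℤ] SymZ Λ :=
  (Finsupp.linearCombination ℤ fun i => (MvPolynomial.X i : SymZ Λ)).comp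
    (Module.Free.chooseBasis ℤ Λ).repr.toLinearMap

/-- The additive structure algebra of edge data `(E, lab)`:
tuples `(z_v)` of elements of `S^*(Λ)` with `z_v - z_w ∈ l(v→w)·S^*(Λ)`
for all edges. -/
abbrev ZaOf {V : Type*} (E : V → V → Prop) (lab : V → V → Λ) :
    Subalgebra (SymZ Λ) (V → SymZ Λ) :=
  structAlg E fun v w => iotaZ Λ (lab v w)

/-- The additive structure algebra `Z_a(Γ)` of a moment graph. -/
abbrev MomentGraph.Za {V : Type*} (G : MomentGraph Λ V) :
    Subalgebra (SymZ Λ) (V → SymZ Λ) :=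
  ZaOf G.E G.label

end StructureAlgebras

noncomputable section Chern

variable {Λ : Type*} [AddCommGroup Λ] [Module.Free ℤ Λ] [Module.Finite ℤ Λ]

/-- A model of the rational symmetric algebra `S^*(Λ) ⊗ ℚ`. -/
abbrev SymQ (Λ : Type*) [AddCommGroup Λ] [Module.Free ℤ Λ] [Module.Finite ℤ Λ] :=
  MvPolynomial (bIdx Λ) ℚ

/-- The canonical embedding `Λ → S^*(Λ) ⊗ ℚ`. -/
def iotaQ (Λ : Type*) [AddCommGroup Λ] [Module.Free ℤ Λ] [Module.Finite ℤ Λ] :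
    Λ →ₗ[ℤ] SymQ Λ :=
  (Finsupp.linearCombination ℤ fun i => (MvPolynomial.X i : SymQ Λ)).comp
    (Module.Free.chooseBasis ℤ Λ).repr.toLinearMap

/-- The augmentation ideal `I_a` of the rational symmetric algebra: the kernel of
the ring homomorphism sending every `λ ∈ Λ` to `0`. -/
def IaQ (Λ : Type*) [AddCommGroup Λ] [Module.Free ℤ Λ] [Module.Finite ℤ Λ] :
    Ideal (SymQ Λ) :=
  RingHom.ker (MvPolynomial.constantCoeff : SymQ Λ →+* ℚ)

/-- The truncated rational symmetric algebra `S^{≤ i}_ℚ(Λ) = (S^*(Λ)/I_a^{i+1}) ⊗ ℚ`. -/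
abbrev STrunc (Λ : Type*) [AddCommGroup Λ] [Module.Free ℤ Λ] [Module.Finite ℤ Λ] (i : ℕ) :=
  SymQ Λ ⧸ (IaQ Λ) ^ (i + 1)

/-- The quotient map `S^*_ℚ(Λ) → S^{≤ i}_ℚ(Λ)`. -/
def trMk (Λ : Type*) [AddCommGroup Λ] [Module.Free ℤ Λ] [Module.Finite ℤ Λ] (i : ℕ) :
    SymQ Λ →+* STrunc Λ i :=
  Ideal.Quotient.mk _

/-- The truncated exponential `Σ_{j ≤ i} μ^j/j!` in `S^{≤ i}_ℚ(Λ)`. -/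
def texp (Λ : Type*) [AddCommGroup Λ] [Module.Free ℤ Λ] [Module.Finite ℤ Λ]
    (i : ℕ) (μ : Λ) : STrunc Λ i :=
  ∑ j ∈ Finset.range (i + 1), (j.factorial : ℚ)⁻¹ • (trMk Λ i (iotaQ Λ μ)) ^ j

/-- The truncated rational additive structure algebra of edge data `(E, lab)`. -/
abbrev ZatOf {V : Type*} (i : ℕ) (E : V → V → Prop) (lab : V → V → Λ) :
    Subalgebra (STrunc Λ i) (V → STrunc Λ i) :=
  structAlg E fun v w => trMk Λ i (iotaQ Λ (lab v w))

/-- The truncated rational additive structure algebra `Z_a^{≤ i}(Γ)_ℚ`. -/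
abbrev MomentGraph.Zat {V : Type*} (G : MomentGraph Λ V) (i : ℕ) :
    Subalgebra (STrunc Λ i) (V → STrunc Λ i) :=
  ZatOf i G.E G.label

end Chern

noncomputable section Statements
open MomentGraph
variable {Λ : Type*} [AddCommGroup Λ] [Module.Free ℤ Λ] [Module.Finite ℤ Λ]
variable {V V' : Type*}



section Aux
set_option synthInstance.maxHeartbeats 1000000
set_option maxHeartbeats 1000000
variable {Λ : Type*} [AddCommGroup Λ] [Module.Free ℤ Λ] [Module.Finite ℤ Λ]

lemma iotaQ_mem_IaQ (μ : Λ) : iotaQ Λ μ ∈ IaQ Λ := by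
  simp only [IaQ, RingHom.mem_ker]
  rw [iotaQ]
  simp only [LinearMap.coe_comp, Function.comp_apply, LinearEquiv.coe_coe,
    Finsupp.linearCombination_apply]
  rw [Finsupp.sum]
  rw [map_sum]
  refine Finset.sum_eq_zero fun j _ => ?_
  rw [map_zsmul]
  simp

lemma trMk_iotaQ_pow_mul (i : ℕ) (μ ν : Λ) (j k : ℕ) (hjk : i + 1 ≤ j + k) :
    (trMk Λ i (iotaQ Λ μ)) ^ j * (trMk Λ i (iotaQ Λ ν)) ^ k = 0 := by
  rw [← map_pow (trMk Λ i), ← map_pow (trMk Λ i), ← map_mul]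
  rw [trMk, Ideal.Quotient.eq_zero_iff_mem]
  refine Ideal.pow_le_pow_right hjk ?_
  rw [pow_add]
  exact Ideal.mul_mem_mul (Ideal.pow_mem_pow (iotaQ_mem_IaQ μ) j)
    (Ideal.pow_mem_pow (iotaQ_mem_IaQ ν) k)

lemma texp_add (i : ℕ) (μ ν : Λ) : texp Λ i (μ + ν) = texp Λ i μ * texp Λ i ν := by
  rw [texp, texp, texp, map_add, map_add]
  exact (texp_core i _ _ (trMk_iotaQ_pow_mul i μ ν)).symm

lemma texp_zero (i : ℕ) : texp Λ i (0 : Λ) = 1 := by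
  rw [texp, Finset.sum_eq_single 0]
  · simp
  · intro j _ hj
    simp [map_zero, zero_pow hj]
  · intro habs
    exact absurd (Finset.mem_range.mpr (Nat.succ_pos i)) habs

lemma ch_one (i : ℕ) (ch : GrpRing Λ →ₗ[ℤ] STrunc Λ i)
    (hch : ∀ μ : Λ, ch (grExp μ) = texp Λ i μ) : ch 1 = 1 := by
  have : (1 : GrpRing Λ) = grExp (0 : Λ) := rfl
  rw [this, hch, texp_zero]

lemma ch_mul (i : ℕ) (ch : GrpRing Λ →ₗ[ℤ] STrunc Λ i)
    (hch : ∀ μ : Λ, ch (grExp μ) = texp Λ i μ) (a b : GrpRing Λ) :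
    ch (a * b) = ch a * ch b := by
  have h2 : ∀ ρ : Λ, (AddMonoidAlgebra.of ℤ Λ (Multiplicative.ofAdd ρ)) = grExp ρ :=
    fun ρ => rfl
  refine AddMonoidAlgebra.induction_on (motive := fun a => ch (a * b) = ch a * ch b) a (fun μ => ?_) (fun f g hf hg => ?_)
    (fun r f hf => ?_)
  · refine AddMonoidAlgebra.induction_on (motive := fun b => ch (_ * b) = ch _ * ch b) b (fun ν => ?_) (fun f g hf hg => ?_)
      (fun r f hf => ?_)
    · have h1 : (AddMonoidAlgebra.of ℤ Λ (Multiplicative.ofAdd μ)) *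
          (AddMonoidAlgebra.of ℤ Λ (Multiplicative.ofAdd ν)) = grExp (μ + ν) := by
        rw [← map_mul]
        rfl
      rw [h1, h2, h2, hch, hch, hch, texp_add]
    · rw [mul_add, map_add, map_add, hf, hg, mul_add]
    · rw [mul_smul_comm, map_zsmul, hf, map_zsmul, mul_smul_comm]
  · rw [add_mul, map_add, map_add, hf, hg, add_mul]
  · rw [smul_mul_assoc, map_zsmul, hf, map_zsmul, smul_mul_assoc]

lemma ch_grX_dvd (i : ℕ) (ch : GrpRing Λ →ₗ[ℤ] STrunc Λ i)
    (hch : ∀ μ : Λ, ch (grExp μ) = texp Λ i μ) (μ : Λ) :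
    ∃ s, ch (grX μ) = trMk Λ i (iotaQ Λ μ) * s := by
  rw [grX, map_sub, ch_one i ch hch, hch]
  set xm : STrunc Λ i := trMk Λ i (iotaQ Λ μ) with hxm
  have hy : trMk Λ i (iotaQ Λ (-μ)) = -xm := by rw [map_neg, map_neg]
  have : texp Λ i (-μ) = ∑ j ∈ Finset.range (i + 1), (j.factorial : ℚ)⁻¹ • (-xm) ^ j := by
    rw [texp, hy]
  rw [this]
  suffices h : xm ∣ 1 - ∑ j ∈ Finset.range (i + 1), (j.factorial : ℚ)⁻¹ • (-xm) ^ j by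
    obtain ⟨s, hs⟩ := h
    exact ⟨s, hs⟩
  rw [Finset.sum_range_succ']
  simp only [Nat.factorial_zero, Nat.cast_one, inv_one, pow_zero, one_smul]
  rw [sub_add_eq_sub_sub, sub_sub_cancel_left]
  refine dvd_neg.mpr (Finset.dvd_sum fun j _ => ?_)
  refine ⟨((j + 1).factorial : ℚ)⁻¹ • (-(-xm) ^ j), ?_⟩
  rw [mul_smul_comm]
  congr 1
  ring

end Aux
theorem stmt12 (G : MomentGraph Λ V) (i : ℕ) (ch : GrpRing Λ →ₗ[ℤ] STrunc Λ i)
    (hch : ∀ μ : Λ, ch (grExp μ) = texp Λ i μ) :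
    ∃ Φ : G.Zm →+* G.Zat i, ∀ (z : G.Zm) (v : V),
      (Φ z : V → STrunc Λ i) v = ch ((z : V → GrpRing Λ) v) := by
  have hmem : ∀ z : G.Zm, (fun v => ch ((z : V → GrpRing Λ) v)) ∈ G.Zat i := by
    intro z v w hvw
    obtain ⟨t, ht⟩ := z.2 hvw
    obtain ⟨s, hs⟩ := ch_grX_dvd i ch hch (G.label v w)
    refine ⟨s * ch t, ?_⟩
    rw [← map_sub, ht, ch_mul i ch hch, hs]
    ring
  refine ⟨{ toFun := fun z => ⟨fun v => ch ((z : V → GrpRing Λ) v), hmem z⟩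
            map_one' := ?_
            map_mul' := ?_
            map_zero' := ?_
            map_add' := ?_ }, fun z v => rfl⟩
  · ext v
    show ch (((1 : G.Zm) : V → GrpRing Λ) v) = ((1 : G.Zat i) : V → STrunc Λ i) v
    simp only [OneMemClass.coe_one, Pi.one_apply]
    exact ch_one i ch hch
  · intro a b
    ext v
    show ch (((a * b : G.Zm) : V → GrpRing Λ) v) = _
    simp only [MulMemClass.coe_mul, Pi.mul_apply]
    exact ch_mul i ch hch _ _
  · ext v
    show ch (((0 : G.Zm) : V → GrpRing Λ) v) = ((0 : G.Zat i) : V → STrunc Λ i) v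
    simp only [ZeroMemClass.coe_zero, Pi.zero_apply, map_zero]
  · intro a b
    ext v
    show ch (((a + b : G.Zm) : V → GrpRing Λ) v) = _
    simp only [AddMemClass.coe_add, Pi.add_apply, map_add]

end Statements
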